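/- For every positive integer n, every set S of permutations of [n] = {1,…,n} such that any two distinct permutations in S are locally parallel satisfies 6^{⌊n/3⌋} · |S| ≤ n!. -/

import Mathlib

/-- Two permutations `σ` and `τ` of `[n]` are *locally parallel* if there exist
distinct elements `a, b` with `σ⁻¹(a) < σ⁻¹(b)`, `τ⁻¹(b) < τ⁻¹(a)`, and the position
intervals `[σ⁻¹(a), σ⁻¹(b)]` and `[τ⁻¹(b), τ⁻¹(a)]` disjoint. -/
def LocallyParallel {n : ℕ} (σ τ : Equiv.Perm (Fin n)) : Prop :=
  ∃ a b : Fin n, a ≠ b ∧ σ⁻¹ a < σ⁻¹ b ∧ τ⁻¹ b < τ⁻¹ a ∧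
    Set.Icc (σ⁻¹ a) (σ⁻¹ b) ∩ Set.Icc (τ⁻¹ b) (τ⁻¹ a) = ∅

namespace LPAux

/-- Natural-number version of the action of a family of `Fin 3` permutations. -/
def natAct {n : ℕ} (g : Fin (n / 3) → Equiv.Perm (Fin 3)) (k j : ℕ) : ℕ :=
  if h : k < n / 3 ∧ j < 3 then (g ⟨k, h.1⟩ ⟨j, h.2⟩ : ℕ) else j

lemma natAct_lt {n : ℕ} (g : Fin (n / 3) → Equiv.Perm (Fin 3)) (k j : ℕ) (hj : j < 3) :
    natAct g k j < 3 := by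
  unfold natAct
  split
  · exact Fin.isLt _
  · exact hj

lemma natAct_inj {n : ℕ} (g : Fin (n / 3) → Equiv.Perm (Fin 3)) (k j1 j2 : ℕ)
    (hk : k < n / 3) (hj1 : j1 < 3) (hj2 : j2 < 3)
    (h : natAct g k j1 = natAct g k j2) : j1 = j2 := by
  unfold natAct at h
  rw [dif_pos ⟨hk, hj1⟩, dif_pos ⟨hk, hj2⟩] at h
  have := (g ⟨k, hk⟩).injective (Fin.ext h : (g ⟨k, hk⟩) ⟨j1, hj1⟩ = (g ⟨k, hk⟩) ⟨j2, hj2⟩)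
  exact congrArg Fin.val this

lemma natAct_eq {n : ℕ} (g : Fin (n / 3) → Equiv.Perm (Fin 3)) (k : Fin (n / 3)) (j : Fin 3) :
    natAct g (k : ℕ) (j : ℕ) = ((g k) j : ℕ) := by
  unfold natAct
  rw [dif_pos ⟨k.isLt, j.isLt⟩]

def bpFun {n : ℕ} (g : Fin (n / 3) → Equiv.Perm (Fin 3)) (p : Fin n) : Fin n :=
  if h : (p : ℕ) / 3 < n / 3 then
    ⟨3 * ((p : ℕ) / 3) + natAct g ((p : ℕ) / 3) ((p : ℕ) % 3), by
      have h2 := natAct_lt g ((p : ℕ) / 3) ((p : ℕ) % 3) (by omega)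
      omega⟩
  else p

lemma bpFun_val {n : ℕ} (g : Fin (n / 3) → Equiv.Perm (Fin 3)) (p : Fin n) :
    ((bpFun g p : Fin n) : ℕ) =
      if (p : ℕ) / 3 < n / 3 then 3 * ((p : ℕ) / 3) + natAct g ((p : ℕ) / 3) ((p : ℕ) % 3)
      else (p : ℕ) := by
  unfold bpFun
  split <;> simp_all

lemma bpFun_div {n : ℕ} (g : Fin (n / 3) → Equiv.Perm (Fin 3)) (p : Fin n) :
    ((bpFun g p : Fin n) : ℕ) / 3 = (p : ℕ) / 3 := by
  rw [bpFun_val]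
  split
  · have h2 := natAct_lt g ((p : ℕ) / 3) ((p : ℕ) % 3) (by omega)
    omega
  · rfl

lemma bpFun_inj {n : ℕ} (g : Fin (n / 3) → Equiv.Perm (Fin 3)) :
    Function.Injective (bpFun g) := by
  intro p q hpq
  have hval : ((bpFun g p : Fin n) : ℕ) = ((bpFun g q : Fin n) : ℕ) := congrArg Fin.val hpq
  rw [bpFun_val, bpFun_val] at hval
  have hd : (p : ℕ) / 3 = (q : ℕ) / 3 := by
    have h1 := bpFun_div g p
    have h2 := bpFun_div g q
    rw [hpq] at h1; omega
  apply Fin.ext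
  by_cases hp : (p : ℕ) / 3 < n / 3
  · rw [if_pos hp, if_pos (hd ▸ hp), ← hd] at hval
    have hm := natAct_inj g ((p : ℕ) / 3) ((p : ℕ) % 3) ((q : ℕ) % 3) hp (by omega) (by omega)
      (by omega)
    omega
  · rw [if_neg hp, if_neg (hd ▸ hp)] at hval
    exact hval

noncomputable def bp {n : ℕ} (f : Fin (n / 3) → Equiv.Perm (Fin 3)) : Equiv.Perm (Fin n) :=
  Equiv.ofBijective (bpFun f) (Finite.injective_iff_bijective.mp (bpFun_inj f))

lemma bp_val {n : ℕ} (f : Fin (n / 3) → Equiv.Perm (Fin 3)) (p : Fin n) :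
    ((bp f p : Fin n) : ℕ) =
      if (p : ℕ) / 3 < n / 3 then 3 * ((p : ℕ) / 3) + natAct f ((p : ℕ) / 3) ((p : ℕ) % 3)
      else (p : ℕ) := bpFun_val f p

lemma bp_div {n : ℕ} (f : Fin (n / 3) → Equiv.Perm (Fin 3)) (p : Fin n) :
    ((bp f p : Fin n) : ℕ) / 3 = (p : ℕ) / 3 := bpFun_div f p

lemma bp_inv_div {n : ℕ} (f : Fin (n / 3) → Equiv.Perm (Fin 3)) (p : Fin n) :
    (((bp f)⁻¹ p : Fin n) : ℕ) / 3 = (p : ℕ) / 3 := by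
  have := bp_div f ((bp f)⁻¹ p)
  rw [show (bp f) ((bp f)⁻¹ p) = p from (bp f).apply_symm_apply p] at this
  omega

lemma bp_injective {n : ℕ} : Function.Injective (bp (n := n)) := by
  intro f g hfg
  funext k
  apply Equiv.ext
  intro j
  have hk : (k : ℕ) < n / 3 := k.isLt
  have hj : (j : ℕ) < 3 := j.isLt
  have hlt : 3 * (k : ℕ) + (j : ℕ) < n := by omega
  set p : Fin n := ⟨3 * (k : ℕ) + (j : ℕ), hlt⟩ with hp
  have hpd : (p : ℕ) / 3 = (k : ℕ) := by simp only [hp]; omega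
  have hpm : (p : ℕ) % 3 = (j : ℕ) := by simp only [hp]; omega
  have h1 : ((bp f p : Fin n) : ℕ) = ((bp g p : Fin n) : ℕ) := by rw [hfg]
  rw [bp_val, bp_val, if_pos (by omega), if_pos (by omega), hpd, hpm] at h1
  have h2 : natAct f (k : ℕ) (j : ℕ) = natAct g (k : ℕ) (j : ℕ) := by omega
  rw [natAct_eq, natAct_eq] at h2
  exact Fin.ext h2

end LPAux

open LPAux in
/-- Any set of pairwise locally parallel permutations of `[n]` has size at most
`n! / 6 ^ ⌊n/3⌋`. -/
theorem card_pairwise_locallyParallel_le (n : ℕ) (hn : 0 < n)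
    (S : Finset (Equiv.Perm (Fin n)))
    (hS : ∀ σ ∈ S, ∀ τ ∈ S, σ ≠ τ → LocallyParallel σ τ) :
    6 ^ (n / 3) * S.card ≤ Nat.factorial n := by
  classical
  have key : ((S ×ˢ (Finset.univ : Finset (Fin (n/3) → Equiv.Perm (Fin 3)))).card
      ≤ (Finset.univ : Finset (Equiv.Perm (Fin n))).card) := by
    apply Finset.card_le_card_of_injOn (fun x => x.1 * bp x.2)
    · intro x _; exact Finset.mem_univ _
    · rintro ⟨σ, f⟩ hx ⟨τ, g⟩ hy h
      simp only [Finset.mem_coe, Finset.mem_product] at hx hy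
      have hσ : σ ∈ S := hx.1
      have hτ : τ ∈ S := hy.1
      simp only at h
      have hblk : ∀ a : Fin n, ((σ⁻¹ a : Fin n) : ℕ) / 3 = ((τ⁻¹ a : Fin n) : ℕ) / 3 := by
        intro a
        have h1 : (σ * bp f)⁻¹ a = (τ * bp g)⁻¹ a := by rw [h]
        have h2 : (bp f)⁻¹ (σ⁻¹ a) = (bp g)⁻¹ (τ⁻¹ a) := by
          simpa [mul_inv_rev, Equiv.Perm.mul_apply] using h1
        have h3 := bp_inv_div f (σ⁻¹ a)
        have h4 := bp_inv_div g (τ⁻¹ a)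
        rw [h2] at h3
        omega
      have hστ : σ = τ := by
        by_contra hne
        obtain ⟨a, b, hab, h1, h2, hdisj⟩ := hS σ hσ τ hτ hne
        set A1 := ((σ⁻¹ a : Fin n) : ℕ) with hA1
        set B1 := ((σ⁻¹ b : Fin n) : ℕ) with hB1
        set B2 := ((τ⁻¹ b : Fin n) : ℕ) with hB2
        set A2 := ((τ⁻¹ a : Fin n) : ℕ) with hA2
        have hA : A1 / 3 = A2 / 3 := hblk a
        have hB : B1 / 3 = B2 / 3 := hblk b
        have h1' : A1 < B1 := h1
        have h2' : B2 < A2 := h2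
        have hsep : B1 < B2 ∨ A2 < A1 := by
          by_contra hcon
          push_neg at hcon
          have hxlt : max A1 B2 < n := by
            have := (σ⁻¹ b).isLt
            have := (τ⁻¹ a).isLt
            omega
          have hmem : (⟨max A1 B2, hxlt⟩ : Fin n) ∈
              Set.Icc (σ⁻¹ a) (σ⁻¹ b) ∩ Set.Icc (τ⁻¹ b) (τ⁻¹ a) := by
            refine ⟨⟨?_, ?_⟩, ?_, ?_⟩ <;> rw [Fin.le_def] <;> simp only [Fin.val_mk] <;> omega
          rw [hdisj] at hmem
          exact hmem
        omega
      subst hστ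
      have hfg : bp f = bp g := mul_left_cancel h
      have : f = g := bp_injective hfg
      subst this
      rfl
  rw [Finset.card_product, Finset.card_univ, Finset.card_univ, Fintype.card_perm,
    Fintype.card_fin, Fintype.card_fun, Fintype.card_perm, Fintype.card_fin,
    Fintype.card_fin] at key
  have h6 : Nat.factorial 3 = 6 := rfl
  rw [h6] at key
  calc 6 ^ (n / 3) * S.card = S.card * 6 ^ (n / 3) := by ring
    _ ≤ Nat.factorial n := key
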